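/- arXiv:1610.07436 — 2 statements merged into one kernel-verified Lean document; each statement's English description precedes it below -/
import Mathlib

section
/- Let W : [0,∞) → ℝ be a continuous nonnegative function and K > 0 a constant such that at every time t where W(t) ≥ K, the upper Dini derivative satisfies D₊W(t) ≤ −W(t)². Then W(t) ≤ max{W(0), K} for all t ≥ 0, and moreover W(t) ≤ max{1/t, K} for all t > 0. -/
open Set Filter Topology

/-- From a real limsup bound with negative bound, extract "frequently below `r`". -/
private lemma freq_of_limsup_le {l : Filter ℝ} [l.NeBot] {f : ℝ → ℝ} {c r : ℝ}
    (h : Filter.limsup f l ≤ c) (hc : c < 0) (hr : c < r) : ∃ᶠ x in l, f x < r := by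
  by_cases hb : Filter.IsBoundedUnder (· ≤ ·) l f
  · exact (Filter.eventually_lt_of_limsup_lt (h.trans_lt hr) hb).frequently
  · exfalso
    have hempty : { a : ℝ | ∀ᶠ x in l, f x ≤ a } = ∅ := by
      ext a
      simp only [mem_setOf_eq, mem_empty_iff_false, iff_false]
      intro ha
      exact hb ⟨a, Filter.eventually_map.mpr ha⟩
    have : Filter.limsup f l = 0 := by
      rw [Filter.limsup_eq, hempty, Real.sInf_empty]
    linarith [h, this]

private lemma shift_freq {x r : ℝ} {W : ℝ → ℝ}
    (h : ∃ᶠ s in 𝓝[>] (0:ℝ), (W (x + s) - W x) / s < r) :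
    ∃ᶠ z in 𝓝[>] x, slope W x z < r := by
  have hmap : Filter.map (fun s => x + s) (𝓝[>] (0:ℝ)) = 𝓝[>] x := by
    have := (Homeomorph.addLeft x).isEmbedding.map_nhdsWithin_eq (Ioi (0:ℝ)) 0
    simpa [Homeomorph.coe_addLeft, image_const_add_Ioi] using this
  rw [← hmap, Filter.frequently_map]
  refine h.mono fun s hs => ?_
  rwa [slope_def_field, add_sub_cancel_left]

/-- The barrier comparison: if `B` is a barrier strictly above `K` with
`-(B x)^2 < B' x`, then `W` stays below `B`. -/
private lemma barrier_le {W : ℝ → ℝ} {K : ℝ} (hK : 0 < K)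
    (hcont : ContinuousOn W (Set.Ici 0))
    (hdini : ∀ t ≥ (0 : ℝ), K ≤ W t →
      Filter.limsup (fun s => (W (t + s) - W t) / s) (𝓝[>] (0:ℝ)) ≤ -(W t) ^ 2)
    {a b : ℝ} (ha : 0 ≤ a) (hab : a ≤ b) {B B' : ℝ → ℝ}
    (hBa : W a ≤ B a)
    (hKB : ∀ x ∈ Set.Icc a b, K < B x)
    (hBc : ContinuousOn B (Set.Icc a b))
    (hB' : ∀ x ∈ Set.Ico a b, HasDerivWithinAt B (B' x) (Set.Ici x) x)
    (hbd : ∀ x ∈ Set.Ico a b, -(B x) ^ 2 < B' x) :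
    ∀ x ∈ Set.Icc a b, W x ≤ B x := by
  set F : ℝ → ℝ := fun s => max (W s) K with hF
  set F' : ℝ → ℝ := fun s => if K < W s then -(W s) ^ 2 else 0 with hF'
  have hsub : Set.Icc a b ⊆ Set.Ici 0 := fun x hx => le_trans ha hx.1
  have hFc : ContinuousOn F (Set.Icc a b) := (hcont.mono hsub).sup continuousOn_const
  have key : ∀ x ∈ Set.Icc a b, F x ≤ B x := by
    refine image_le_of_liminf_slope_right_lt_deriv_boundary' (f' := F') hFc ?_ ?_ hBc hB' ?_
    · -- slope condition
      intro x hx r hr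
      have hx0 : (0:ℝ) ≤ x := le_trans ha hx.1
      rcases lt_trichotomy (W x) K with hlt | heq | hgt
      · -- W x < K : F is locally constant K on the right
        have h0 : F' x = 0 := by simp [hF', not_lt.mpr hlt.le]
        rw [h0] at hr
        have hev : ∀ᶠ z in 𝓝[>] x, W z < K := by
          have hW : ContinuousWithinAt W (Set.Ici 0) x := hcont x hx0
          have : ∀ᶠ z in 𝓝[Set.Ici 0] x, W z < K :=
            hW.eventually_lt_const hlt
          exact (nhdsWithin_mono x (fun z (hz : z ∈ Ioi x) =>
            le_trans hx0 (le_of_lt hz))) this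
        refine (hev.mono fun z hz => ?_).frequently
        have hFz : F z = K := max_eq_right hz.le
        have hFx : F x = K := max_eq_right hlt.le
        rw [slope_def_field, hFz, hFx, sub_self, zero_div]
        exact hr
      · -- W x = K
        have h0 : F' x = 0 := by simp [hF', heq, lt_irrefl]
        rw [h0] at hr
        have hls := hdini x hx0 heq.ge
        have hneg : -(W x) ^ 2 < 0 := by nlinarith [heq ▸ hK]
        have hfreq : ∃ᶠ s in 𝓝[>] (0:ℝ), (W (x + s) - W x) / s < -(W x)^2 / 2 :=
          freq_of_limsup_le hls hneg (by linarith)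
        have := shift_freq hfreq
        refine (this.mp (Filter.eventually_of_mem self_mem_nhdsWithin
          fun z (hz : z ∈ Ioi x) h => ?_))
        have hzx : 0 < z - x := sub_pos.mpr hz
        rw [slope_def_field] at h
        have hWz : W z < W x := by
          have hneg2 : (W z - W x) / (z - x) < 0 := lt_of_lt_of_le h (by linarith)
          have := (div_lt_iff₀ hzx).mp hneg2
          linarith
        have hFz : F z = K := max_eq_right (by linarith [heq ▸ hWz])
        have hFx : F x = K := max_eq_right heq.le
        rw [slope_def_field, hFz, hFx, sub_self, zero_div]
        exact hr
      · -- W x > K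
        have h0 : F' x = -(W x) ^ 2 := by simp [hF', hgt]
        rw [h0] at hr
        have hls := hdini x hx0 hgt.le
        have hneg : -(W x) ^ 2 < 0 := by nlinarith
        have hfreq : ∃ᶠ z in 𝓝[>] x, slope W x z < r :=
          shift_freq (freq_of_limsup_le hls hneg hr)
        have hev : ∀ᶠ z in 𝓝[>] x, K < W z := by
          have hW : ContinuousWithinAt W (Set.Ici 0) x := hcont x hx0
          have : ∀ᶠ z in 𝓝[Set.Ici 0] x, K < W z :=
            hW.eventually_const_lt hgt
          exact (nhdsWithin_mono x (fun z (hz : z ∈ Ioi x) =>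
            le_trans hx0 (le_of_lt hz))) this
        refine (hfreq.and_eventually hev).mono fun z ⟨h1, h2⟩ => ?_
        have hFz : F z = W z := max_eq_left h2.le
        have hFx : F x = W x := max_eq_left hgt.le
        rw [slope_def_field, hFz, hFx]
        rw [slope_def_field] at h1
        exact h1
    · -- initial condition
      exact max_le hBa (hKB a ⟨le_refl a, hab⟩).le
    · -- bound at contact points
      intro x hx hFB
      have hKBx : K < B x := hKB x (Ico_subset_Icc_self hx)
      have hgt : K < W x := by
        by_contra h
        push_neg at h
        have : F x = K := max_eq_right h
        rw [this] at hFB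
        exact absurd hFB.symm (ne_of_gt hKBx)
      have hWB : W x = B x := by
        have : F x = W x := max_eq_left hgt.le
        rw [← this, hFB]
      have : F' x = -(W x) ^ 2 := by simp [hF', hgt]
      rw [this, hWB]
      exact hbd x hx
  intro x hx
  exact le_trans (le_max_left _ _) (key x hx)

/-- Propagation: once below a level `C ≥ K`, stays below. -/
private lemma prop_le {W : ℝ → ℝ} {K : ℝ} (hK : 0 < K)
    (hcont : ContinuousOn W (Set.Ici 0))
    (hdini : ∀ t ≥ (0 : ℝ), K ≤ W t →
      Filter.limsup (fun s => (W (t + s) - W t) / s) (𝓝[>] (0:ℝ)) ≤ -(W t) ^ 2)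
    {a C : ℝ} (ha : 0 ≤ a) (hWa : W a ≤ C) (hKC : K ≤ C) :
    ∀ t ≥ a, W t ≤ C := by
  intro t hta
  have h : ∀ ε > (0:ℝ), W t ≤ C + ε := by
    intro ε hε
    have := barrier_le hK hcont hdini ha hta (B := fun _ => C + ε) (B' := fun _ => 0)
      (by show W a ≤ C + ε; linarith) (fun x _ => by show K < C + ε; linarith)
      continuousOn_const (fun x _ => hasDerivWithinAt_const x _ _)
      (fun x _ => by show -(C + ε) ^ 2 < 0; nlinarith)
    exact this t ⟨hta, le_refl t⟩
  linarith [le_of_forall_pos_le_add h]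

/-- Tso-type comparison principle: a continuous nonnegative function whose
upper Dini derivative satisfies `D₊W ≤ -W²` wherever `W ≥ K` remains bounded
by `max (W 0) K`, and moreover by `max (1/t) K` for `t > 0`. -/
theorem stmt_8 (W : ℝ → ℝ) (K : ℝ) (hK : 0 < K)
    (hcont : ContinuousOn W (Set.Ici 0))
    (hnonneg : ∀ t ≥ (0 : ℝ), 0 ≤ W t)
    (hdini : ∀ t ≥ (0 : ℝ), K ≤ W t →
      Filter.limsup (fun s => (W (t + s) - W t) / s) (nhdsWithin 0 (Set.Ioi 0))
        ≤ -(W t) ^ 2) :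
    (∀ t ≥ (0 : ℝ), W t ≤ max (W 0) K) ∧ (∀ t > (0 : ℝ), W t ≤ max (1 / t) K) := by
  have hW0 : 0 ≤ W 0 := hnonneg 0 le_rfl
  constructor
  · intro t ht
    exact prop_le hK hcont hdini le_rfl (le_max_left _ _) (le_max_right _ _) t ht
  · -- second part
    have hsmall : ∀ t, 0 < t → t < 1 / K → W t ≤ 1 / t := by
      intro t ht htK
      have h : ∀ η > (0:ℝ), W t ≤ 1 / t + η := by
        intro η hη
        set δ : ℝ := min (1 / K - t) (1 / (W 0 + 1)) with hδdef
        have hδ : 0 < δ := lt_min (by linarith) (by positivity)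
        have hδ1 : t + δ ≤ 1 / K := by
          have := min_le_left (1 / K - t) (1 / (W 0 + 1))
          linarith
        have hδ2 : W 0 ≤ 1 / δ := by
          have h1 : δ ≤ 1 / (W 0 + 1) := min_le_right _ _
          have h2 : W 0 + 1 ≤ 1 / δ := by
            rw [le_div_iff₀ hδ]
            calc (W 0 + 1) * δ ≤ (W 0 + 1) * (1 / (W 0 + 1)) := by
                  apply mul_le_mul_of_nonneg_left h1 (by linarith)
              _ = 1 := by field_simp
          linarith
        have hbar := barrier_le hK hcont hdini (a := 0) (b := t) le_rfl ht.le
          (B := fun s => (s + δ)⁻¹ + η) (B' := fun s => -((s + δ) ^ 2)⁻¹)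
          (by show W 0 ≤ (0 + δ)⁻¹ + η
              rw [one_div] at hδ2
              rw [zero_add]
              linarith)
          (fun x hx => by
            have hx0 : 0 ≤ x := hx.1
            have hxd : 0 < x + δ := by linarith
            have hxd2 : x + δ ≤ 1 / K := by
              have := hx.2; linarith
            have hK2 : K ≤ (x + δ)⁻¹ := by
              rw [le_inv_comm₀ hK hxd]
              rw [one_div] at hxd2
              exact hxd2
            show K < (x + δ)⁻¹ + η
            linarith)
          (by
            apply ContinuousOn.add _ continuousOn_const
            apply ContinuousOn.inv₀ (by fun_prop)
            intro x hx
            have : 0 ≤ x := hx.1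
            positivity)
          (fun x hx => by
            have hx0 : 0 ≤ x := hx.1
            have h1 : HasDerivAt (fun s : ℝ => (s + δ)⁻¹ + η) (-((x + δ) ^ 2)⁻¹) x := by
              have h2 : HasDerivAt (fun s : ℝ => s + δ) 1 x :=
                (hasDerivAt_id x).add_const δ
              have h3 := (h2.inv (by positivity))
              simpa [neg_div, one_div] using h3.add_const η
            exact h1.hasDerivWithinAt)
          (fun x hx => by
            have hx0 : 0 ≤ x := hx.1
            have hxd : 0 < x + δ := by linarith
            have hxi : 0 < (x + δ)⁻¹ := by positivity
            show -((x + δ)⁻¹ + η) ^ 2 < -((x + δ) ^ 2)⁻¹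
            have heq2 : ((x + δ) ^ 2)⁻¹ = ((x + δ)⁻¹) ^ 2 := by rw [inv_pow]
            rw [heq2]
            nlinarith)
        have := hbar t ⟨ht.le, le_refl t⟩
        have htδ : (t + δ)⁻¹ ≤ 1 / t := by
          rw [one_div]
          apply inv_anti₀ ht (by linarith)
        linarith
      exact le_of_forall_pos_le_add h
    intro t ht
    rcases lt_or_ge t (1 / K) with htK | htK
    · exact le_trans (hsmall t ht htK) (le_max_left _ _)
    · -- t ≥ 1/K: show W t ≤ K
      have hWtK : W t ≤ K := by
        have h : ∀ ε > (0:ℝ), W t ≤ K + ε := by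
          intro ε hε
          set s : ℝ := 1 / (K + ε) with hs
          have hs0 : 0 < s := by positivity
          have hsK : s < 1 / K := by
            rw [hs]
            apply one_div_lt_one_div_of_lt hK (by linarith)
          have hst : s ≤ t := le_trans hsK.le htK
          have hWs : W s ≤ K + ε := by
            have := hsmall s hs0 hsK
            rwa [hs, one_div_one_div] at this
          exact prop_le hK hcont hdini hs0.le hWs (by linarith) t hst
        linarith [le_of_forall_pos_le_add h]
      exact le_trans hWtK (le_max_right _ _)
end

section
/- Let (M, μ) be a finite measure space with μ(M) > 0, H : M → ℝ integrable, and φ : ℝ → ℝ nondecreasing and L-Lipschitz with L > 0, with φ∘H integrable. Let H̄ ∈ ℝ satisfy φ(H̄) = (1/μ(M)) ∫_M φ(H) dμ. Then ∫_M (H − H̄)(φ(H̄) − φ(H)) dμ ≤ −(1/L) ∫_M |φ(H) − φ(H̄)|² dμ. -/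
/-- Quantitative Chebyshev-type inequality: if `φ` is nondecreasing and
`L`-Lipschitz and `φ(H̄)` equals the mean value of `φ(H)`, then
`∫ (H - H̄)(φ(H̄) - φ(H)) dμ ≤ -(1/L) ∫ |φ(H) - φ(H̄)|² dμ`. -/
theorem stmt_18 {M : Type*} [MeasurableSpace M] (μ : MeasureTheory.Measure M)
    [MeasureTheory.IsFiniteMeasure μ] (hμ : 0 < (μ Set.univ).toReal)
    (H : M → ℝ) (φ : ℝ → ℝ) (L Hbar : ℝ) (hL : 0 < L)
    (hmono : Monotone φ) (hlip : ∀ x y : ℝ, |φ x - φ y| ≤ L * |x - y|)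
    (hH : MeasureTheory.Integrable H μ)
    (hφH : MeasureTheory.Integrable (fun x => φ (H x)) μ)
    (hprod : MeasureTheory.Integrable (fun x => (H x - Hbar) * (φ Hbar - φ (H x))) μ)
    (hHbar : φ Hbar = (1 / (μ Set.univ).toReal) * ∫ x, φ (H x) ∂μ) :
    ∫ x, (H x - Hbar) * (φ Hbar - φ (H x)) ∂μ
      ≤ -(1 / L) * ∫ x, |φ (H x) - φ Hbar| ^ 2 ∂μ := by
  have key : ∀ x, (H x - Hbar) * (φ Hbar - φ (H x))
      ≤ -(1 / L) * |φ (H x) - φ Hbar| ^ 2 := by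
    intro x
    have hlx := hlip (H x) Hbar
    rcases le_total (H x) Hbar with h | h
    · have hφ : φ (H x) ≤ φ Hbar := hmono h
      rw [abs_of_nonpos (by linarith), abs_of_nonpos (by linarith)] at hlx
      rw [abs_of_nonpos (by linarith : φ (H x) - φ Hbar ≤ 0)]
      have h1 : 0 ≤ φ Hbar - φ (H x) := by linarith
      have key2 : (1 / L) * (φ Hbar - φ (H x)) ^ 2 ≤
          (Hbar - H x) * (φ Hbar - φ (H x)) := by
        rw [one_div, inv_mul_le_iff₀ hL]
        nlinarith
      nlinarith [key2]
    · have hφ : φ Hbar ≤ φ (H x) := hmono h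
      rw [abs_of_nonneg (by linarith), abs_of_nonneg (by linarith)] at hlx
      rw [abs_of_nonneg (by linarith : 0 ≤ φ (H x) - φ Hbar)]
      have key2 : (1 / L) * (φ (H x) - φ Hbar) ^ 2 ≤
          (H x - Hbar) * (φ (H x) - φ Hbar) := by
        rw [one_div, inv_mul_le_iff₀ hL]
        nlinarith
      nlinarith [key2]
  have hint : MeasureTheory.Integrable
      (fun x => -(1 / L) * |φ (H x) - φ Hbar| ^ 2) μ := by
    refine hprod.mono ?_ ?_
    · refine MeasureTheory.AEStronglyMeasurable.const_mul ?_ _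
      exact ((hφH.sub (MeasureTheory.integrable_const _)).abs.aestronglyMeasurable).pow 2
    · filter_upwards with x
      have h1 := key x
      have h2 : (0:ℝ) ≤ (1 / L) * |φ (H x) - φ Hbar| ^ 2 :=
        mul_nonneg (by positivity) (by positivity)
      rw [Real.norm_eq_abs, Real.norm_eq_abs, abs_of_nonpos (by linarith)]
      calc -(-(1 / L) * |φ (H x) - φ Hbar| ^ 2)
          = (1 / L) * |φ (H x) - φ Hbar| ^ 2 := by ring
        _ ≤ -((H x - Hbar) * (φ Hbar - φ (H x))) := by linarith
        _ ≤ |(H x - Hbar) * (φ Hbar - φ (H x))| := neg_le_abs _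
  calc ∫ x, (H x - Hbar) * (φ Hbar - φ (H x)) ∂μ
      ≤ ∫ x, -(1 / L) * |φ (H x) - φ Hbar| ^ 2 ∂μ :=
        MeasureTheory.integral_mono hprod hint key
    _ = -(1 / L) * ∫ x, |φ (H x) - φ Hbar| ^ 2 ∂μ :=
        MeasureTheory.integral_const_mul _ _
end
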